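/- The generating functions G_b satisfy the functional equation G_b(x) = (x^{b−1}/(1−x^{b−1})) · (G_{b−1}(x) + 1) for all b ≥ 2, where G_1(x) = 0. -/

import Mathlib

/-- `gFun b n` is the number of supporting `(n,b)`-domino towers, defined by the recurrence
`g_b(n) = g_b(n-b+1) + g_{b-1}(n-b+1)` with `g_b(b-1) = 1` for `b ≥ 2` and
`g_b(n) = 0` for `n < 1`, `b < 2`, or `n < b - 1`. -/
def gFun : ℕ → ℕ → ℕ
  | b, n =>
    if b < 2 ∨ n + 1 < b then 0
    else if n + 1 = b then 1
    else gFun b (n + 1 - b) + gFun (b - 1) (n + 1 - b)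
termination_by b n => n
decreasing_by all_goals omega

open PowerSeries in
/-- The generating functions `G_b(x) = Σ_{n≥0} g_b(n) xⁿ` satisfy the functional equation
`G_b(x) = (x^{b-1}/(1-x^{b-1})) (G_{b-1}(x) + 1)` for all `b ≥ 2`, where `G_1(x) = 0`. -/
theorem supporting_tower_genFun_eq :
    (∀ b : ℕ, 2 ≤ b →
      PowerSeries.mk (fun n => (gFun b n : ℚ)) =
        (X : PowerSeries ℚ) ^ (b - 1) * (1 - (X : PowerSeries ℚ) ^ (b - 1))⁻¹ *
          (PowerSeries.mk (fun n => (gFun (b - 1) n : ℚ)) + 1)) ∧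
    PowerSeries.mk (fun n => (gFun 1 n : ℚ)) = 0 := by
  constructor
  · intro b hb
    set k := b - 1 with hk
    have hk1 : 1 ≤ k := by omega
    have hu : (constantCoeff (R := ℚ)) (1 - (X : PowerSeries ℚ) ^ k) ≠ 0 := by
      simp [zero_pow (by omega : k ≠ 0)]
    have key : (1 - (X : PowerSeries ℚ) ^ k) * PowerSeries.mk (fun n => (gFun b n : ℚ)) =
        (X : PowerSeries ℚ) ^ k * (PowerSeries.mk (fun n => (gFun (b - 1) n : ℚ)) + 1) := by
      ext n
      rw [sub_mul, one_mul, map_sub, coeff_X_pow_mul', coeff_X_pow_mul']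
      simp only [coeff_mk, map_add, coeff_one]
      by_cases h1 : k ≤ n
      · rw [if_pos h1, if_pos h1]
        by_cases h2 : n = k
        · subst h2
          have e1 : gFun b k = 1 := by
            rw [gFun]; simp only [if_neg (by omega : ¬(b < 2 ∨ k + 1 < b)),
              if_pos (by omega : k + 1 = b)]
          have e2 : gFun b (k - k) = 0 := by
            rw [gFun]; simp only [if_pos (by omega : b < 2 ∨ k - k + 1 < b)]
          have e3 : gFun (b - 1) (k - k) = 0 := by
            rw [gFun]
            rcases Nat.lt_or_ge (b-1) 2 with h | h
            · simp [h]
            · simp only [if_pos (by omega : b - 1 < 2 ∨ k - k + 1 < b - 1)]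
          rw [e1, e2, e3, if_pos (by omega : k - k = 0)]; norm_num
        · have e1 : gFun b n = gFun b (n + 1 - b) + gFun (b - 1) (n + 1 - b) := by
            rw [gFun]; simp only [if_neg (by omega : ¬(b < 2 ∨ n + 1 < b)),
              if_neg (by omega : ¬ n + 1 = b)]
          have e4 : n + 1 - b = n - k := by omega
          rw [e1, e4, if_neg (by omega : ¬ n - k = 0)]; push_cast; ring
      · rw [if_neg h1, if_neg h1]
        have e1 : gFun b n = 0 := by
          rw [gFun]; simp only [if_pos (by omega : b < 2 ∨ n + 1 < b)]
        rw [e1]; norm_num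
    calc PowerSeries.mk (fun n => (gFun b n : ℚ))
        = (1 - (X : PowerSeries ℚ) ^ k)⁻¹ * ((1 - (X : PowerSeries ℚ) ^ k) *
            PowerSeries.mk (fun n => (gFun b n : ℚ))) := by
          rw [← mul_assoc, PowerSeries.inv_mul_cancel _ hu, one_mul]
      _ = _ := by rw [key]; ring
  · apply PowerSeries.ext
    intro n
    rw [PowerSeries.coeff_mk, gFun]
    simp
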